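/- Let X₁ be a nondegenerate integer-valued random variable with characteristic function φ. Then there exist a real number c > 0 and a positive integer d such that 1 - |φ(2πx)| ≥ c·‖dx‖² for all x ∈ ℝ. -/

import Mathlib

open MeasureTheory Real

/-- Distance from a real number to the nearest integer. -/
noncomputable def nint (x : ℝ) : ℝ := |x - round x|

lemma nint_cos (y : ℝ) : 8 * nint y ^ 2 ≤ 1 - Real.cos (2 * π * y) := by
  have hr : |y - (round y : ℤ)| ≤ 1/2 := abs_sub_round y
  set r := y - (round y : ℤ) with hrdef
  have hcos : Real.cos (2*π*y) = Real.cos (2*π*r) := by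
    have h : 2*π*y = 2*π*r + (round y : ℤ) * (2*π) := by ring
    rw [h, Real.cos_add_int_mul_two_pi]
  have hsin : Real.cos (2*π*r) = 1 - 2 * Real.sin (π*r)^2 := by
    have h2 : 2*π*r = 2*(π*r) := by ring
    rw [h2, Real.cos_two_mul]
    nlinarith [Real.sin_sq_add_cos_sq (π*r)]
  have habs : 2 * |r| ≤ Real.sin (π * |r|) := by
    have h1 : 0 ≤ π * |r| := by positivity
    have h2 : π * |r| ≤ π/2 := by nlinarith [Real.pi_pos, abs_nonneg r]
    have h3 := Real.mul_le_sin h1 h2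
    have hπ : π ≠ 0 := Real.pi_ne_zero
    calc 2 * |r| = 2/π * (π * |r|) := by field_simp
    _ ≤ Real.sin (π*|r|) := h3
  have hsq : Real.sin (π*r)^2 = Real.sin (π*|r|)^2 := by
    rcases abs_cases r with ⟨h,_⟩|⟨h,_⟩
    · rw [h]
    · rw [h, mul_neg, Real.sin_neg, neg_sq]
  have hnn : 0 ≤ 2 * |r| := by positivity
  have : nint y = |r| := rfl
  rw [this, hcos, hsin]
  nlinarith [sq_abs r]

lemma abs_two_exp (p q θ : ℝ) (hp : 0 < p) (hq : 0 < q) :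
    ‖(p:ℂ) * Complex.exp ((θ:ℂ) * Complex.I) + (q:ℂ)‖ ≤
      (p+q) - p*q/(p+q) * (1 - Real.cos θ) := by
  set L := ‖(p:ℂ) * Complex.exp ((θ:ℂ) * Complex.I) + (q:ℂ)‖ with hL
  have hL0 : 0 ≤ L := norm_nonneg _
  have hsq : L^2 = p^2 + q^2 + 2*p*q*Real.cos θ := by
    rw [hL, Complex.sq_norm, Complex.normSq_apply]
    simp only [Complex.add_re, Complex.add_im, Complex.mul_re, Complex.mul_im,
      Complex.ofReal_re, Complex.ofReal_im, Complex.exp_ofReal_mul_I_re,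
      Complex.exp_ofReal_mul_I_im]
    nlinarith [Real.sin_sq_add_cos_sq θ]
  set u := p*q/(p+q) * (1 - Real.cos θ) with hu
  have hpq : 0 < p + q := by linarith
  have huu : (p+q) * u = p*q*(1 - Real.cos θ) := by
    rw [hu]; field_simp
  have hcos1 := Real.cos_le_one θ
  have hcos2 := Real.neg_one_le_cos θ
  have hpos : 0 ≤ (p+q) - u := by nlinarith [sq_nonneg (p-q)]
  nlinarith [sq_nonneg u, hsq, huu, hpos, hL0]

theorem stmt5 {Ω : Type*} [MeasurableSpace Ω] (μ : Measure Ω) [IsProbabilityMeasure μ]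
    (X : Ω → ℝ) (hmeas : Measurable X)
    (hint : ∀ ω, ∃ k : ℤ, X ω = (k : ℝ))
    (hnondeg : ¬ ∃ r : ℝ, ∀ᵐ ω ∂μ, X ω = r)
    (φ : ℝ → ℂ)
    (hφ : ∀ t : ℝ, φ t = ∫ ω, Complex.exp (Complex.I * ((t * X ω : ℝ) : ℂ)) ∂μ) :
    ∃ c : ℝ, 0 < c ∧ ∃ d : ℕ, 0 < d ∧
      ∀ x : ℝ, c * nint ((d : ℝ) * x) ^ 2 ≤ 1 - ‖φ (2 * π * x)‖ := by
  classical
  set S : ℤ → Set Ω := fun k => X ⁻¹' {(k:ℝ)} with hS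
  have hSm : ∀ k, MeasurableSet (S k) := fun k => hmeas (measurableSet_singleton _)
  -- there is an atom
  have hex : ∃ a : ℤ, 0 < μ (S a) := by
    by_contra h
    push_neg at h
    have hcover : (⋃ k : ℤ, S k) = Set.univ := by
      ext ω
      simp only [Set.mem_iUnion, Set.mem_univ, iff_true]
      obtain ⟨k, hk⟩ := hint ω
      exact ⟨k, hk⟩
    have h0 : μ (⋃ k : ℤ, S k) = 0 :=
      measure_iUnion_null fun k => le_antisymm (h k) zero_le
    rw [hcover, measure_univ] at h0
    exact one_ne_zero h0
  obtain ⟨a, ha⟩ := hex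
  -- there is a second atom
  have hex2 : ∃ b : ℤ, b ≠ a ∧ 0 < μ (S b) := by
    by_contra h
    push_neg at h
    apply hnondeg
    refine ⟨(a:ℝ), ?_⟩
    have hnull : μ {ω | ¬ X ω = (a:ℝ)} = 0 := by
      have hsub : {ω | ¬ X ω = (a:ℝ)} ⊆ ⋃ b : ℤ, (if b = a then (∅ : Set Ω) else S b) := by
        intro ω hω
        obtain ⟨k, hk⟩ := hint ω
        have hka : k ≠ a := by rintro rfl; exact hω hk
        refine Set.mem_iUnion.mpr ⟨k, ?_⟩
        simp only [if_neg hka, hS]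
        exact hk
      refine measure_mono_null hsub (measure_iUnion_null ?_)
      intro b
      by_cases hb : b = a
      · simp [hb]
      · simp only [if_neg hb]
        exact le_antisymm (h b hb) zero_le
    exact ae_iff.mpr hnull
  obtain ⟨b, hba, hb⟩ := hex2
  set A := S a with hA
  set B := S b with hB
  have hAm : MeasurableSet A := hSm a
  have hBm : MeasurableSet B := hSm b
  have hdisj : Disjoint A B := by
    rw [Set.disjoint_left]
    intro ω hωA hωB
    apply hba
    have h1 : X ω = (a:ℝ) := hωA
    have h2 : X ω = (b:ℝ) := hωB
    exact_mod_cast (h2.symm.trans h1)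
  set p := (μ A).toReal with hpdef
  set q := (μ B).toReal with hqdef
  have hp : 0 < p := ENNReal.toReal_pos (ne_of_gt ha) (measure_ne_top μ A)
  have hq : 0 < q := ENNReal.toReal_pos (ne_of_gt hb) (measure_ne_top μ B)
  have hABm : MeasurableSet (A ∪ B) := hAm.union hBm
  have hABmeas : (μ (A ∪ B)).toReal = p + q := by
    rw [measure_union hdisj hBm, ENNReal.toReal_add (measure_ne_top μ A) (measure_ne_top μ B)]
  have hCmeas : (μ (A ∪ B)ᶜ).toReal = 1 - (p + q) := by
    have h1 : μ (A ∪ B) + μ (A ∪ B)ᶜ = 1 := by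
      rw [measure_add_measure_compl hABm, measure_univ]
    have h2 : (μ (A ∪ B)).toReal + (μ (A ∪ B)ᶜ).toReal = 1 := by
      rw [← ENNReal.toReal_add (measure_ne_top _ _) (measure_ne_top _ _), h1]
      simp
    linarith [hABmeas]
  -- integrability
  have hintg : ∀ t : ℝ, Integrable (fun ω => Complex.exp (Complex.I * ((t * X ω : ℝ) : ℂ))) μ := by
    intro t
    have hm : Measurable (fun ω => Complex.exp (Complex.I * ((t * X ω : ℝ) : ℂ))) :=
      Complex.measurable_exp.comp
        (((Complex.measurable_ofReal.comp (hmeas.const_mul t)).const_mul Complex.I))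
    refine (integrable_const (1:ℝ)).mono' hm.aestronglyMeasurable (ae_of_all _ fun ω => ?_)
    rw [Complex.norm_exp]
    simp
  -- the constants
  refine ⟨8 * p * q / (p + q), by positivity, (a - b).natAbs, ?_, ?_⟩
  · rw [Int.natAbs_pos]
    exact sub_ne_zero.mpr (fun hh => hba hh.symm)
  intro x
  set t := 2 * π * x with ht
  set f : Ω → ℂ := fun ω => Complex.exp (Complex.I * ((t * X ω : ℝ) : ℂ)) with hf
  set d : ℕ := (a - b).natAbs with hd
  set θ : ℝ := t * ((a:ℝ) - (b:ℝ)) with hθ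
  -- integrals over A and B
  have hIA : ∫ ω in A, f ω ∂μ = (p : ℂ) * Complex.exp (Complex.I * ((t * (a:ℝ) : ℝ) : ℂ)) := by
    rw [setIntegral_congr_fun hAm (g := fun _ => Complex.exp (Complex.I * ((t * (a:ℝ) : ℝ) : ℂ)))
      (fun ω hω => by simp only [hf]; rw [show X ω = (a:ℝ) from hω]),
      setIntegral_const]
    rw [Complex.real_smul]; rfl
  have hIB : ∫ ω in B, f ω ∂μ = (q : ℂ) * Complex.exp (Complex.I * ((t * (b:ℝ) : ℝ) : ℂ)) := by
    rw [setIntegral_congr_fun hBm (g := fun _ => Complex.exp (Complex.I * ((t * (b:ℝ) : ℝ) : ℂ)))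
      (fun ω hω => by simp only [hf]; rw [show X ω = (b:ℝ) from hω]),
      setIntegral_const]
    rw [Complex.real_smul]; rfl
  have hsplit : φ t = ∫ ω in A, f ω ∂μ + ∫ ω in B, f ω ∂μ + ∫ ω in (A ∪ B)ᶜ, f ω ∂μ := by
    rw [hφ t, ← integral_add_compl hABm (hintg t),
      setIntegral_union hdisj hBm ((hintg t).integrableOn) ((hintg t).integrableOn)]
  -- bound the complement integral
  have hCbound : ‖∫ ω in (A ∪ B)ᶜ, f ω ∂μ‖ ≤ 1 - (p + q) := by
    rw [← hCmeas]
    have := norm_setIntegral_le_of_norm_le_const (μ := μ) (s := (A ∪ B)ᶜ) (f := f)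
      (measure_lt_top μ _) (C := 1) (fun ω _ => by
        rw [hf, Complex.norm_exp]; simp)
    simpa [Measure.real] using this
  -- factor out e_b
  have hea : Complex.exp (Complex.I * ((t * (a:ℝ) : ℝ) : ℂ)) =
      Complex.exp (Complex.I * ((t * (b:ℝ) : ℝ) : ℂ)) * Complex.exp ((θ:ℂ) * Complex.I) := by
    rw [← Complex.exp_add]
    congr 1
    simp only [hθ]
    push_cast
    ring
  have habsb : ‖Complex.exp (Complex.I * ((t * (b:ℝ) : ℝ) : ℂ))‖ = 1 := by
    rw [Complex.norm_exp]; simp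
  have hmain : ‖(p:ℂ) * Complex.exp (Complex.I * ((t * (a:ℝ) : ℝ) : ℂ)) +
      (q:ℂ) * Complex.exp (Complex.I * ((t * (b:ℝ) : ℝ) : ℂ))‖ ≤
      (p + q) - p*q/(p+q) * (1 - Real.cos θ) := by
    calc ‖(p:ℂ) * Complex.exp (Complex.I * ((t * (a:ℝ) : ℝ) : ℂ)) +
        (q:ℂ) * Complex.exp (Complex.I * ((t * (b:ℝ) : ℝ) : ℂ))‖
        = ‖(p:ℂ) * Complex.exp ((θ:ℂ) * Complex.I) + (q:ℂ)‖ := by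
          rw [hea, show (p:ℂ) * (Complex.exp (Complex.I * ((t * (b:ℝ) : ℝ) : ℂ)) *
            Complex.exp ((θ:ℂ) * Complex.I)) +
            (q:ℂ) * Complex.exp (Complex.I * ((t * (b:ℝ) : ℝ) : ℂ)) =
            Complex.exp (Complex.I * ((t * (b:ℝ) : ℝ) : ℂ)) *
            ((p:ℂ) * Complex.exp ((θ:ℂ) * Complex.I) + (q:ℂ)) by ring,
            norm_mul, habsb, one_mul]
      _ ≤ (p + q) - p*q/(p+q) * (1 - Real.cos θ) := abs_two_exp p q θ hp hq
  -- relate cos θ to cos (2π(dx))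
  have hcosθ : Real.cos θ = Real.cos (2 * π * ((d:ℝ) * x)) := by
    have hdd : ((d:ℕ):ℝ) = |(a:ℝ) - (b:ℝ)| := by
      simp only [hd, Nat.cast_natAbs]
      push_cast
      ring
    rcases abs_cases ((a:ℝ) - (b:ℝ)) with ⟨hh, _⟩ | ⟨hh, _⟩
    · rw [hθ, hdd, hh]
      congr 1
      rw [ht]; ring
    · rw [hθ, hdd, hh, show 2 * π * (-((a:ℝ) - (b:ℝ)) * x) = -(t * ((a:ℝ) - (b:ℝ))) by
        rw [ht]; ring, Real.cos_neg]
  -- put it together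
  have hφbound : ‖φ t‖ ≤
      ((p + q) - p*q/(p+q) * (1 - Real.cos θ)) + (1 - (p + q)) := by
    rw [hsplit, hIA, hIB]
    calc ‖(p:ℂ) * Complex.exp (Complex.I * ((t * (a:ℝ) : ℝ) : ℂ)) +
        (q:ℂ) * Complex.exp (Complex.I * ((t * (b:ℝ) : ℝ) : ℂ)) + ∫ ω in (A ∪ B)ᶜ, f ω ∂μ‖
        ≤ ‖(p:ℂ) * Complex.exp (Complex.I * ((t * (a:ℝ) : ℝ) : ℂ)) +
          (q:ℂ) * Complex.exp (Complex.I * ((t * (b:ℝ) : ℝ) : ℂ))‖ +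
          ‖∫ ω in (A ∪ B)ᶜ, f ω ∂μ‖ := norm_add_le _ _
      _ ≤ _ := add_le_add hmain hCbound
  have hnc := nint_cos ((d:ℝ) * x)
  have hfrac : 0 ≤ p*q/(p+q) := by positivity
  have hchain : p*q/(p+q) * (8 * nint ((d:ℝ) * x) ^ 2) ≤ p*q/(p+q) * (1 - Real.cos θ) := by
    rw [hcosθ]
    exact mul_le_mul_of_nonneg_left hnc hfrac
  have hfinal : 8 * p * q / (p + q) * nint ((d:ℝ) * x) ^ 2 ≤ 1 - ‖φ t‖ := by
    have heq : p*q/(p+q) * (8 * nint ((d:ℝ) * x) ^ 2) =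
        8 * p * q / (p + q) * nint ((d:ℝ) * x) ^ 2 := by ring
    linarith [hφbound, hchain, heq]
  exact hfinal
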